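/- For a polynomial f(λ) = f_1 λ^{g-1} + ... + f_g of degree less than g and distinct points λ_1, ..., λ_g, each coefficient satisfies f_n = -∑_{j=1}^g (f(λ_j)/β'(λ_j)) · (∂β_n/∂λ_j), where β_n is the n-th coefficient of β(λ) = ∏_{j=1}^g (λ - λ_j) = λ^g + β_1 λ^{g-1} + ... + β_g, viewed as a function of λ_1, ..., λ_g. -/

import Mathlib

/-- The monic polynomial `β(λ) = ∏_{j} (λ - λ_j)` with the roots `λ_j` regarded as
indeterminates; its coefficients `β_n = B.coeff (g - n)` are `(-1)^n` times elementary
symmetric polynomials. -/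
noncomputable def betaP (F : Type*) [Field F] (g : ℕ) :
    Polynomial (MvPolynomial (Fin g) F) :=
  ∏ l : Fin g, (Polynomial.X - Polynomial.C (MvPolynomial.X l))

open Polynomial Finset

-- coefficients of a product not involving variable j have zero pderiv
lemma pderiv_coeff_prod_zero {F : Type*} [Field F] {g : ℕ} (j : Fin g)
    (s : Finset (Fin g)) (hj : j ∉ s) (k : ℕ) :
    MvPolynomial.pderiv j ((∏ l ∈ s, (X - C (MvPolynomial.X l)) :
      Polynomial (MvPolynomial (Fin g) F)).coeff k) = 0 := by
  classical
  induction s using Finset.induction_on generalizing k with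
  | empty => simp [Polynomial.coeff_one]; split <;> simp
  | @insert i s hi ih =>
    have hij : i ≠ j := fun h => hj (h ▸ mem_insert_self i s)
    have hjs : j ∉ s := fun h => hj (mem_insert_of_mem h)
    rw [Finset.prod_insert hi, Polynomial.coeff_mul, map_sum]
    refine Finset.sum_eq_zero fun p hp => ?_
    rw [Derivation.leibniz]
    have h1 : MvPolynomial.pderiv j ((X - C (MvPolynomial.X i) :
        Polynomial (MvPolynomial (Fin g) F)).coeff p.1) = 0 := by
      rcases p with ⟨a, b⟩
      simp only [Polynomial.coeff_sub, Polynomial.coeff_X, Polynomial.coeff_C]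
      split <;> split <;> simp [MvPolynomial.pderiv_X_of_ne hij]
    rw [ih hjs, h1]
    simp

-- pderiv j of a coefficient of the full product
lemma pderiv_coeff_betaP {F : Type*} [Field F] {g : ℕ} (j : Fin g) (k : ℕ) :
    MvPolynomial.pderiv j ((betaP F g).coeff k) =
      -((∏ l ∈ Finset.univ.erase j, (X - C (MvPolynomial.X l)) :
        Polynomial (MvPolynomial (Fin g) F)).coeff k) := by
  classical
  set Q : Polynomial (MvPolynomial (Fin g) F) :=
    ∏ l ∈ Finset.univ.erase j, (X - C (MvPolynomial.X l)) with hQ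
  have hB : betaP F g = (X - C (MvPolynomial.X j)) * Q := by
    rw [betaP, hQ, ← Finset.mul_prod_erase Finset.univ (fun l => (X - C (MvPolynomial.X l) : Polynomial (MvPolynomial (Fin g) F))) (Finset.mem_univ j)]
  have hQ0 : ∀ m, MvPolynomial.pderiv j (Q.coeff m) = 0 := fun m =>
    pderiv_coeff_prod_zero j _ (Finset.notMem_erase j _) m
  rw [hB, sub_mul, Polynomial.coeff_sub, map_sub]
  have hXQ : MvPolynomial.pderiv j ((X * Q).coeff k) = 0 := by
    cases k with
    | zero => simp [Polynomial.coeff_zero, Polynomial.mul_coeff_zero]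
    | succ m => rw [Polynomial.coeff_X_mul]; exact hQ0 m
  rw [hXQ, Polynomial.coeff_C_mul, Derivation.leibniz]
  simp [hQ0 k]

/-- for a polynomial `f(λ) = f_1 λ^{g-1} + ⋯ + f_g` of degree `< g` and
distinct points `λ_1, …, λ_g` in a field of characteristic zero,
`f_n = -∑_j (f(λ_j)/β'(λ_j)) · ∂β_n/∂λ_j`. -/
theorem coeff_eq_neg_sum_pderiv (F : Type*) [Field F] [CharZero F] (g : ℕ)
    (lam : Fin g → F) (hlam : Function.Injective lam)
    (f : Polynomial F) (hf : f.degree < (g : WithBot ℕ))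
    (n : ℕ) (hn1 : 1 ≤ n) (hng : n ≤ g) :
    f.coeff (g - n) =
      -∑ j : Fin g,
        f.eval (lam j) /
            (Polynomial.derivative
              (∏ l : Fin g, (Polynomial.X - Polynomial.C (lam l)))).eval (lam j) *
          MvPolynomial.eval lam
            (MvPolynomial.pderiv j ((betaP F g).coeff (g - n))) := by
  classical
  set k := g - n with hk
  -- evaluate the pderiv term
  have heval : ∀ j : Fin g,
      MvPolynomial.eval lam (MvPolynomial.pderiv j ((betaP F g).coeff k)) =
        -((Lagrange.nodal (Finset.univ.erase j) lam).coeff k) := by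
    intro j
    rw [pderiv_coeff_betaP, map_neg]
    congr 1
    rw [← Polynomial.coeff_map]
    rw [Polynomial.map_prod, Lagrange.nodal]
    congr 1
    ext l : 1
    simp
  have hN : (∏ l : Fin g, (Polynomial.X - Polynomial.C (lam l))) =
      Lagrange.nodal Finset.univ lam := by
    rw [Lagrange.nodal]
  have hvs : Set.InjOn lam (Finset.univ : Finset (Fin g)) := fun a _ b _ h => hlam h
  have hcard : (Finset.univ : Finset (Fin g)).card = g := by simp
  -- Lagrange interpolation
  have hf' : f.degree < ((Finset.univ : Finset (Fin g)).card : WithBot ℕ) := by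
    rwa [hcard]
  have hinterp := Lagrange.eq_interpolate hvs hf'
  have hcoeff : f.coeff k = ∑ j : Fin g,
      Lagrange.nodalWeight Finset.univ lam j *
        ((Lagrange.nodal (Finset.univ.erase j) lam).coeff k * f.eval (lam j)) := by
    conv_lhs => rw [hinterp, Lagrange.interpolate_eq_nodalWeight_mul_nodal_div_X_sub_C]
    rw [Polynomial.finset_sum_coeff]
    refine Finset.sum_congr rfl fun j _ => ?_
    rw [← Lagrange.nodal_erase_eq_nodal_div (Finset.mem_univ j)]
    simp [Polynomial.coeff_C_mul, Polynomial.coeff_mul_C, mul_assoc]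
  rw [hcoeff]
  rw [← Finset.sum_neg_distrib]
  refine Finset.sum_congr rfl fun j _ => ?_
  rw [heval j, hN, div_eq_mul_inv,
    ← Lagrange.nodalWeight_eq_eval_derivative_nodal (Finset.mem_univ j)]
  ring
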